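/- Let n, Δ, δ be positive integers with n/2 < δ ≤ Δ ≤ n-1 and 2Δ > n. Let G be the graph formed by the join of an independent set of n - Δ vertices with a (δ + Δ - n)-regular graph on Δ vertices. If G contains an r-factor (a spanning r-regular subgraph), then r ≤ Δ(δ + Δ - n)/(2Δ - n). -/

import Mathlib

/-- The join of an independent set of `a` vertices with a graph `B` on `b` vertices. -/
def joinIndep (a b : ℕ) (B : SimpleGraph (Fin b)) : SimpleGraph (Fin a ⊕ Fin b) where
  Adj x y :=
    match x, y with
    | Sum.inl _, Sum.inl _ => False
    | Sum.inl _, Sum.inr _ => True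
    | Sum.inr _, Sum.inl _ => True
    | Sum.inr u, Sum.inr w => B.Adj u w
  symm := ⟨by
    rintro (u | u) (w | w) h
    · exact h
    · trivial
    · trivial
    · exact B.symm.symm _ _ h⟩
  loopless := ⟨by
    rintro (u | u) h
    · exact h
    · exact B.loopless.irrefl u h⟩

/-- Let `n/2 < δ ≤ Δ ≤ n-1` with `2Δ > n`, and let `G` be the join of an independent
set of `n - Δ` vertices with a `(δ + Δ - n)`-regular graph `B` on `Δ` vertices.
If `G` contains an `r`-factor then `r ≤ Δ(δ + Δ - n)/(2Δ - n)`. -/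
theorem stmt_2 (n Δ δ : ℕ) (hn : 0 < n) (hδpos : 0 < δ) (hΔpos : 0 < Δ)
    (hδ : n < 2*δ) (hδΔ : δ ≤ Δ) (hΔ : Δ ≤ n - 1) (hΔn : n < 2*Δ)
    (B : SimpleGraph (Fin Δ)) (hB : ∀ u, (B.neighborSet u).ncard = δ + Δ - n)
    (r : ℕ) (H : SimpleGraph (Fin (n - Δ) ⊕ Fin Δ))
    (hH : H ≤ joinIndep (n - Δ) Δ B)
    (hreg : ∀ x, (H.neighborSet x).ncard = r) :
    (r : ℝ) ≤ (Δ : ℝ) * ((δ : ℝ) + (Δ : ℝ) - (n : ℝ)) / (2*(Δ : ℝ) - (n : ℝ)) := by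
  classical
  have hdn : Δ ≤ n := le_trans hΔ (Nat.sub_le n 1)
  have hnd : n ≤ δ + Δ := by omega
  have hdeg : ∀ x, (Finset.univ.filter (H.Adj x)).card = r := by
    intro x
    have h := hreg x
    rw [SimpleGraph.neighborSet, Set.ncard_eq_toFinset_card', Set.toFinset_setOf] at h
    exact h
  have hBdeg : ∀ u, (Finset.univ.filter (B.Adj u)).card = δ + Δ - n := by
    intro u
    have h := hB u
    rw [SimpleGraph.neighborSet, Set.ncard_eq_toFinset_card', Set.toFinset_setOf] at h
    exact h
  set cA : Fin Δ → ℕ := fun b =>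
    (Finset.univ.filter (fun a => H.Adj (Sum.inr b) (Sum.inl a))).card with hcA
  set cB : Fin Δ → ℕ := fun b =>
    (Finset.univ.filter (fun b' => H.Adj (Sum.inr b) (Sum.inr b'))).card with hcB
  have hsplit : ∀ b, cA b + cB b = r := by
    intro b
    rw [← hdeg (Sum.inr b), hcA, hcB]
    simp only [Finset.card_filter]
    rw [Fintype.sum_sum_type]
  have hcBle : ∀ b, cB b ≤ δ + Δ - n := by
    intro b
    rw [← hBdeg b]
    apply Finset.card_le_card
    intro b' hb'
    simp only [Finset.mem_filter, Finset.mem_univ, true_and] at hb' ⊢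
    exact hH hb'
  have hAdeg : ∀ a : Fin (n - Δ),
      (Finset.univ.filter (fun b => H.Adj (Sum.inl a) (Sum.inr b))).card = r := by
    intro a
    rw [← hdeg (Sum.inl a)]
    simp only [Finset.card_filter]
    rw [Fintype.sum_sum_type]
    have : ∀ a' : Fin (n - Δ), ¬ H.Adj (Sum.inl a) (Sum.inl a') := by
      intro a' h
      exact (hH h)
    simp [this]
  have hsum : ∑ b : Fin Δ, cA b = (n - Δ) * r := by
    simp only [hcA, Finset.card_filter]
    rw [Finset.sum_comm]
    have : ∀ a : Fin (n - Δ), (∑ b : Fin Δ, if H.Adj (Sum.inr b) (Sum.inl a) then 1 else 0)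
        = r := by
      intro a
      rw [← hAdeg a, Finset.card_filter]
      congr 1
      ext b
      congr 1
      exact propext ⟨fun h => h.symm, fun h => h.symm⟩
    rw [Finset.sum_congr rfl (fun a _ => this a)]
    simp [Finset.card_univ, mul_comm]
  have key : r * Δ ≤ (n - Δ) * r + Δ * (δ + Δ - n) := by
    calc r * Δ = ∑ _b : Fin Δ, r := by simp [Finset.card_univ, mul_comm]
    _ = ∑ b : Fin Δ, (cA b + cB b) := by
        exact Finset.sum_congr rfl (fun b _ => (hsplit b).symm)
    _ = ∑ b : Fin Δ, cA b + ∑ b : Fin Δ, cB b := Finset.sum_add_distrib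
    _ ≤ (n - Δ) * r + Δ * (δ + Δ - n) := by
        rw [hsum]
        gcongr
        calc ∑ b : Fin Δ, cB b ≤ ∑ _b : Fin Δ, (δ + Δ - n) :=
              Finset.sum_le_sum (fun b _ => hcBle b)
        _ = Δ * (δ + Δ - n) := by simp [Finset.card_univ, mul_comm]
  have keyR : (r : ℝ) * Δ ≤ ((n : ℝ) - Δ) * r + Δ * ((δ : ℝ) + Δ - n) := by
    have := (Nat.cast_le (α := ℝ)).mpr key
    push_cast [Nat.cast_sub hdn, Nat.cast_sub hnd] at this
    linarith
  have hpos : (0 : ℝ) < 2 * (Δ : ℝ) - n := by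
    have : (n : ℝ) < 2 * Δ := by exact_mod_cast hΔn
    linarith
  rw [le_div_iff₀ hpos]
  nlinarith [keyR]
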